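/- For integers n ≥ 1 and 1 ≤ a ≤ n, the average over all x ∈ {0,1}^n of the number of runs of length at least a equals 2^{−a}(n − a + 2); equivalently, ∑_{x ∈ {0,1}^n} ρ_{≥a}(x) = 2^{n−a}(n − a + 2). -/

import Mathlib

/-- `runsGe a u` is the number of maximal runs of `u` of length at least `a`, counted via
their starting positions: positions `i` at which a run starts (`i = 0` or `u_{i-1} ≠ u_i`)
and the following `a` symbols of `u` are equal. -/
def runsGe (a : ℕ) (u : List Bool) : ℕ :=
  ((Finset.range u.length).filter fun i =>
    (i = 0 ∨ u.getD (i - 1) false ≠ u.getD i false) ∧ i + a ≤ u.length ∧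
      ∀ j < a, u.getD (i + j) false = u.getD i false).card

/-- The number of boolean vectors agreeing with `f` on `s` is `2 ^ (n - s.card)`. -/
lemma card_agree {n : ℕ} (s : Finset (Fin n)) (f : Fin n → Bool) :
    (Finset.univ.filter fun x : Fin n → Bool => ∀ k ∈ s, x k = f k).card
      = 2 ^ (n - s.card) := by
  classical
  have e : {x : Fin n → Bool // ∀ k ∈ s, x k = f k} ≃ ({k : Fin n // k ∉ s} → Bool) :=
    { toFun := fun x k => x.1 k.1
      invFun := fun y => ⟨fun k => if h : k ∈ s then f k else y ⟨k, h⟩,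
        fun k hk => dif_pos hk⟩
      left_inv := fun x => by
        ext k
        dsimp only
        split
        · exact (x.2 k ‹_›).symm
        · rfl
      right_inv := fun y => by
        ext k
        exact dif_neg k.2 }
  have h1 : (Finset.univ.filter fun x : Fin n → Bool => ∀ k ∈ s, x k = f k).card
      = Fintype.card {x : Fin n → Bool // ∀ k ∈ s, x k = f k} :=
    (Fintype.card_subtype _).symm
  rw [h1, Fintype.card_congr e, Fintype.card_fun, Fintype.card_bool,
    Fintype.card_subtype]
  congr 1
  have h2 : (Finset.univ.filter fun k : Fin n => k ∉ s) = sᶜ := by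
    ext k; simp
  rw [h2, Finset.card_compl, Fintype.card_fin]

lemma card_agree_or {n : ℕ} (s : Finset (Fin n)) (f g : Fin n → Bool) (k0 : Fin n)
    (hk0 : k0 ∈ s) (hfg : f k0 ≠ g k0) :
    (Finset.univ.filter fun x : Fin n → Bool =>
        (∀ k ∈ s, x k = f k) ∨ (∀ k ∈ s, x k = g k)).card
      = 2 * 2 ^ (n - s.card) := by
  classical
  rw [Finset.filter_or, Finset.card_union_of_disjoint, card_agree, card_agree]
  · ring
  · rw [Finset.disjoint_left]
    intro x hx hx'
    simp only [Finset.mem_filter] at hx hx'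
    exact hfg ((hx.2 k0 hk0).symm.trans (hx'.2 k0 hk0))

/-- For `n ≥ 1` and `1 ≤ a ≤ n`, the sum over all `x ∈ {0,1}ⁿ` of the
number of runs of length at least `a` equals `2^{n−a}·(n − a + 2)`; equivalently, the
average number of such runs is `2^{−a}(n − a + 2)`. -/
theorem sum_runsGe_eq (n a : ℕ) (hn : 1 ≤ n) (ha : 1 ≤ a) (han : a ≤ n) :
    ∑ x : Fin n → Bool, runsGe a (List.ofFn x) = 2 ^ (n - a) * (n - a + 2) := by
  classical
  -- value of the list at a natural index
  have hget : ∀ (x : Fin n → Bool) (k : ℕ) (h : k < n),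
      (List.ofFn x).getD k false = x ⟨k, h⟩ := by
    intro x k h
    rw [List.getD_eq_getElem _ _ (by simpa using h), List.getElem_ofFn]
  -- the predicate for a run of length ≥ a starting at i
  set Q : ℕ → (Fin n → Bool) → Prop := fun i x =>
    (i = 0 ∨ (List.ofFn x).getD (i - 1) false ≠ (List.ofFn x).getD i false) ∧
      i + a ≤ n ∧ ∀ j < a, (List.ofFn x).getD (i + j) false = (List.ofFn x).getD i false
    with hQ
  have hrw : ∀ x : Fin n → Bool, runsGe a (List.ofFn x)
      = ∑ i ∈ Finset.range n, if Q i x then 1 else 0 := by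
    intro x
    rw [runsGe, Finset.card_filter]
    simp [hQ]
  rw [Finset.sum_congr rfl fun x _ => hrw x, Finset.sum_comm]
  have hcount : ∀ i ∈ Finset.range n,
      (∑ x : Fin n → Bool, if Q i x then 1 else 0)
        = (Finset.univ.filter fun x : Fin n → Bool => Q i x).card := by
    intro i _
    rw [Finset.card_filter]
  rw [Finset.sum_congr rfl hcount]
  -- the count for each i
  set c : ℕ → ℕ := fun i => (Finset.univ.filter fun x : Fin n → Bool => Q i x).card with hc
  have hzero : ∀ i, n - a < i → c i = 0 := by
    intro i hi
    rw [hc]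
    simp only [Finset.card_eq_zero, Finset.filter_eq_empty_iff]
    intro x _
    rw [hQ]
    intro hQx
    omega
  have hc0 : c 0 = 2 * 2 ^ (n - a) := by
    have hlt : ∀ m ∈ Finset.range a, m < n := by intro m hm; simp at hm; omega
    have hs : ((Finset.range a).attachFin hlt).card = a := by
      rw [Finset.card_attachFin, Finset.card_range]
    have heq : (Finset.univ.filter fun x : Fin n → Bool => Q 0 x)
        = Finset.univ.filter fun x : Fin n → Bool =>
            (∀ k ∈ (Finset.range a).attachFin hlt, x k = (fun _ => true) k) ∨
            (∀ k ∈ (Finset.range a).attachFin hlt, x k = (fun _ => false) k) := by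
      apply Finset.filter_congr
      intro x _
      rw [hQ]
      constructor
      · rintro ⟨-, -, h3⟩
        have hx0 : ∀ k ∈ (Finset.range a).attachFin hlt, x k = x ⟨0, hn⟩ := by
          intro k hk
          rw [Finset.mem_attachFin, Finset.mem_range] at hk
          have := h3 k.1 hk
          rw [hget x (0 + k.1) (by omega), hget x 0 hn] at this
          simpa using this
        cases hb : x ⟨0, hn⟩ with
        | true => exact Or.inl (fun k hk => (hx0 k hk).trans hb)
        | false => exact Or.inr (fun k hk => (hx0 k hk).trans hb)
      · intro h
        refine ⟨Or.inl rfl, by omega, ?_⟩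
        intro j hj
        have hj' : (⟨j, by omega⟩ : Fin n) ∈ (Finset.range a).attachFin hlt := by
          rw [Finset.mem_attachFin]; simpa using hj
        have h0' : (⟨0, hn⟩ : Fin n) ∈ (Finset.range a).attachFin hlt := by
          rw [Finset.mem_attachFin]; simpa using Nat.pos_of_ne_zero (by omega : a ≠ 0)
        rw [hget x (0 + j) (by omega), hget x 0 hn]
        rcases h with h | h
        · simp only [Nat.zero_add]
          rw [h _ hj', h _ h0']
        · simp only [Nat.zero_add]
          rw [h _ hj', h _ h0']
    show (Finset.univ.filter fun x : Fin n → Bool => Q 0 x).card = 2 * 2 ^ (n - a)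
    rw [heq, card_agree_or _ _ _ ⟨0, hn⟩ (by rw [Finset.mem_attachFin]; simpa using Nat.pos_of_ne_zero (by omega : a ≠ 0))
      (by simp), hs]
  have hci : ∀ i, 1 ≤ i → i ≤ n - a → c i = 2 ^ (n - a) := by
    intro i hi1 hi2
    have hilt : i < n := by omega
    have hi1n : i - 1 < n := by omega
    have hian : i + a ≤ n := by omega
    have hlt : ∀ m ∈ Finset.Ico (i - 1) (i + a), m < n := by
      intro m hm; simp at hm; omega
    have hs : ((Finset.Ico (i - 1) (i + a)).attachFin hlt).card = i + a - (i - 1) := by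
      rw [Finset.card_attachFin, Nat.card_Ico]
    set f : Bool → Fin n → Bool := fun b k => if (k : ℕ) < i then !b else b with hf
    have heq : (Finset.univ.filter fun x : Fin n → Bool => Q i x)
        = Finset.univ.filter fun x : Fin n → Bool =>
            (∀ k ∈ (Finset.Ico (i - 1) (i + a)).attachFin hlt, x k = f true k) ∨
            (∀ k ∈ (Finset.Ico (i - 1) (i + a)).attachFin hlt, x k = f false k) := by
      apply Finset.filter_congr
      intro x _
      rw [hQ]
      constructor
      · rintro ⟨h1, -, h3⟩
        rcases h1 with h1 | h1
        · omega
        rw [hget x (i - 1) hi1n, hget x i hilt] at h1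
        have key : ∀ k ∈ (Finset.Ico (i - 1) (i + a)).attachFin hlt,
            x k = f (x ⟨i, hilt⟩) k := by
          intro k hk
          rw [Finset.mem_attachFin, Finset.mem_Ico] at hk
          simp only [hf]
          by_cases hki : (k : ℕ) < i
          · rw [if_pos hki]
            have hkeq : k = (⟨i - 1, hi1n⟩ : Fin n) := by
              apply Fin.ext; simp; omega
            rw [hkeq]
            revert h1
            cases x ⟨i - 1, hi1n⟩ <;> cases x ⟨i, hilt⟩ <;> simp
          · have hj : (k : ℕ) - i < a := by omega
            have hkk := h3 ((k : ℕ) - i) hj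
            rw [hget x (i + ((k : ℕ) - i)) (by omega), hget x i hilt] at hkk
            rw [if_neg hki]
            have hkeq : (⟨i + ((k : ℕ) - i), by omega⟩ : Fin n) = k := by
              apply Fin.ext; simp; omega
            rw [← hkeq]
            exact hkk
        cases hb : x ⟨i, hilt⟩ with
        | true => exact Or.inl (fun k hk => by rw [key k hk, hb])
        | false => exact Or.inr (fun k hk => by rw [key k hk, hb])
      · intro h
        have hmem : ∀ m : ℕ, (hm1 : i - 1 ≤ m) → (hm2 : m < i + a) →
            (⟨m, by omega⟩ : Fin n) ∈ (Finset.Ico (i - 1) (i + a)).attachFin hlt := by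
          intro m hm1 hm2
          rw [Finset.mem_attachFin, Finset.mem_Ico]; exact ⟨hm1, hm2⟩
        obtain ⟨b, hb⟩ : ∃ b, ∀ k ∈ (Finset.Ico (i - 1) (i + a)).attachFin hlt,
            x k = f b k := by rcases h with h | h; exacts [⟨true, h⟩, ⟨false, h⟩]
        have hxi : x ⟨i, hilt⟩ = b := by
          have h' := hb _ (hmem i (by omega) (by omega))
          simp only [hf] at h'
          simpa using h'
        have hxim : x ⟨i - 1, hi1n⟩ = !b := by
          have h' := hb _ (hmem (i - 1) le_rfl (by omega))
          simp only [hf] at h'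
          have hcond : i - 1 < i := by omega
          simpa [hcond] using h'
        refine ⟨Or.inr ?_, hian, ?_⟩
        · rw [hget x (i - 1) hi1n, hget x i hilt, hxim, hxi]
          cases b <;> simp
        · intro j hj
          have hxij : x ⟨i + j, by omega⟩ = b := by
            have h' := hb _ (hmem (i + j) (by omega) (by omega))
            simp only [hf] at h'
            simpa using h'
          rw [hget x (i + j) (by omega), hget x i hilt, hxij, hxi]
    show (Finset.univ.filter fun x : Fin n → Bool => Q i x).card = 2 ^ (n - a)
    rw [heq, card_agree_or _ _ _ ⟨i, hilt⟩
      (by rw [Finset.mem_attachFin, Finset.mem_Ico]; constructor <;> simp <;> omega)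
      (by simp [hf]), hs]
    have h2 : i + a - (i - 1) = a + 1 := by omega
    have h3 : n - a = (n - (a + 1)) + 1 := by omega
    rw [h2, h3, pow_succ]
    ring
  -- assemble
  have hsub : Finset.range (n - a + 1) ⊆ Finset.range n := by
    apply Finset.range_subset_range.mpr; omega
  rw [← Finset.sum_subset hsub (by
    intro i hi hni
    simp only [Finset.mem_range] at hi hni
    exact hzero i (by omega))]
  rw [Finset.sum_range_succ' (fun i => c i) (n - a)]
  have hconst : ∀ i ∈ Finset.range (n - a), c (i + 1) = 2 ^ (n - a) := by
    intro i hi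
    simp only [Finset.mem_range] at hi
    exact hci (i + 1) (by omega) (by omega)
  rw [Finset.sum_congr rfl hconst, Finset.sum_const, Finset.card_range, hc0]
  ring
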